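/- Let Λ be a countable group and let s ∈ Λ be an element of infinite order. Then for any finite family U_1, …, U_n of pairwise disjoint nonempty proper clopen subsets of the Cantor set X, there exists an action α : Λ → Homeo(X) such that α_s(U_i) = U_{i+1} for all 1 ≤ i ≤ n, where U_{n+1} := U_1. -/

import Mathlib

section CantorAuxSection
open Set Filter Topology TopologicalSpace
namespace CantorAux
def lU {α : Type*} : List (Set α) → Set α
  | [] => ∅
  | B :: T => B ∪ lU T
lemma mem_lU {α : Type*} {L : List (Set α)} {x : α} : x ∈ lU L ↔ ∃ B ∈ L, x ∈ B := by
  induction L with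
  | nil => simp [lU]
  | cons B T ih => simp [lU, ih]
lemma lU_subset {α : Type*} {L : List (Set α)} {A : Set α} (h : ∀ B ∈ L, B ⊆ A) :
    lU L ⊆ A := by
  intro x hx; obtain ⟨B, hB, hxB⟩ := mem_lU.1 hx; exact h B hB hxB
lemma subset_lU {α : Type*} {L : List (Set α)} {B : Set α} (h : B ∈ L) : B ⊆ lU L :=
  fun x hx => mem_lU.2 ⟨B, h, hx⟩
lemma isClopen_lU {α : Type*} [TopologicalSpace α] {L : List (Set α)}
    (h : ∀ B ∈ L, IsClopen B) : IsClopen (lU L) := by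
  induction L with
  | nil => simpa [lU] using isClopen_empty
  | cons B T ih => exact (h B (by simp)).union (ih fun C hC => h C (by simp [hC]))
lemma disjoint_lU {α : Type*} {L : List (Set α)} {A : Set α}
    (h : ∀ B ∈ L, Disjoint A B) : Disjoint A (lU L) := by
  induction L with
  | nil => simp [lU]
  | cons B T ih =>
    rw [lU, disjoint_union_right]
    exact ⟨h B (by simp), ih fun C hC => h C (by simp [hC])⟩
lemma lU_nonempty {α : Type*} {L : List (Set α)} {B : Set α} (hB : B ∈ L) (h : B.Nonempty) :
    (lU L).Nonempty := h.mono (subset_lU hB)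
def Small {α : Type*} [MetricSpace α] (ε : ℝ) (A : Set α) : Prop :=
  ∀ p ∈ A, ∀ q ∈ A, dist p q ≤ ε
lemma Small.mono {α : Type*} [MetricSpace α] {ε : ℝ} {A B : Set α} (h : Small ε A)
    (hBA : B ⊆ A) : Small ε B := fun p hp q hq => h p (hBA hp) q (hBA hq)
lemma Small.mono' {α : Type*} [MetricSpace α] {ε ε' : ℝ} {A : Set α} (h : Small ε A)
    (hε : ε ≤ ε') : Small ε' A := fun p hp q hq => (h p hp q hq).trans hε
noncomputable def flt {α : Type*} (L : List (Set α)) : List (Set α) :=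
  L.filter (fun B => @decide B.Nonempty (Classical.propDecidable _))
lemma mem_flt {α : Type*} {L : List (Set α)} {B : Set α} :
    B ∈ flt L ↔ B ∈ L ∧ B.Nonempty := by
  rw [flt, List.mem_filter]
  congr! 1
  rw [@decide_eq_true_eq _ (Classical.propDecidable _)]
lemma lU_flt {α : Type*} (L : List (Set α)) : lU (flt L) = lU L := by
  induction L with
  | nil => rfl
  | cons B T ih =>
    rw [flt, List.filter_cons]
    split
    · rw [flt] at ih; rw [lU, ih, lU]
    · rw [flt] at ih; rw [ih, lU]
      have hB : B = ∅ := by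
        rw [Set.not_nonempty_iff_eq_empty.symm]
        intro hne
        simp_all [@decide_eq_true_eq _ (Classical.propDecidable _)]
      simp [hB]
lemma flt_sublist {α : Type*} (L : List (Set α)) : (flt L).Sublist L :=
  List.filter_sublist
def dj {α : Type*} : List (Set α) → List (Set α)
  | [] => []
  | B :: T => B :: (dj T).map (· \ B)
lemma lU_map_diff {α : Type*} (L : List (Set α)) (B : Set α) :
    lU (L.map (· \ B)) = lU L \ B := by
  induction L with
  | nil => simp [lU, dj]
  | cons C T ih => simp [lU, dj, ih, Set.union_diff_distrib]
lemma lU_dj {α : Type*} (L : List (Set α)) : lU (dj L) = lU L := by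
  induction L with
  | nil => rfl
  | cons B T ih => rw [dj, lU, lU, lU_map_diff, ih, Set.union_diff_self]
lemma dj_subset {α : Type*} (L : List (Set α)) : ∀ B ∈ dj L, ∃ C ∈ L, B ⊆ C := by
  induction L with
  | nil => simp [dj]
  | cons B T ih =>
    intro D hD
    rw [dj] at hD
    rcases List.mem_cons.1 hD with h | h
    · exact ⟨B, by simp, h ▸ subset_rfl⟩
    · obtain ⟨E, hE, rfl⟩ := List.mem_map.1 h
      obtain ⟨C, hC, hEC⟩ := ih E hE
      exact ⟨C, by simp [hC], diff_subset.trans hEC⟩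
lemma dj_clopen {α : Type*} [TopologicalSpace α] {L : List (Set α)}
    (h : ∀ B ∈ L, IsClopen B) : ∀ B ∈ dj L, IsClopen B := by
  induction L with
  | nil => simp [dj]
  | cons B T ih =>
    intro D hD
    rw [dj] at hD
    rcases List.mem_cons.1 hD with h' | h'
    · exact h' ▸ h B (by simp)
    · obtain ⟨E, hE, rfl⟩ := List.mem_map.1 h'
      exact (ih (fun C hC => h C (by simp [hC])) E hE).diff (h B (by simp))
lemma dj_pairwise {α : Type*} (L : List (Set α)) : (dj L).Pairwise Disjoint := by
  induction L with
  | nil => simp [dj]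
  | cons B T ih =>
    rw [dj]
    refine List.pairwise_cons.2 ⟨?_, ?_⟩
    · intro D hD
      obtain ⟨E, _, rfl⟩ := List.mem_map.1 hD
      exact Set.disjoint_sdiff_right
    · exact ih.map _ fun a b hab => hab.mono diff_subset diff_subset

section Space
variable {Y : Type*} [MetricSpace Y] [CompactSpace Y] [TotallyDisconnectedSpace Y]

lemma exists_split
    (htwo : ∀ V : Set Y, IsOpen V → V.Nonempty → ∃ a ∈ V, ∃ b ∈ V, a ≠ b)
    {A : Set Y} (hA : IsClopen A) (hne : A.Nonempty) :
    ∃ B C : Set Y, IsClopen B ∧ IsClopen C ∧ B.Nonempty ∧ C.Nonempty ∧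
      Disjoint B C ∧ B ∪ C = A := by
  obtain ⟨a, ha, b, hb, hab⟩ := htwo A hA.isOpen hne
  obtain ⟨V, hV, haV, hVsub⟩ :=
    compact_exists_isClopen_in_isOpen (hA.isOpen.inter isOpen_compl_singleton)
      (⟨ha, hab⟩ : a ∈ A ∩ {b}ᶜ)
  have hVA : V ⊆ A := hVsub.trans inter_subset_left
  refine ⟨V, A \ V, hV, hA.diff hV, ⟨a, haV⟩, ⟨b, hb, fun hbV => (hVsub hbV).2 rfl⟩,
    Set.disjoint_sdiff_right, Set.union_diff_cancel hVA⟩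

def IsGood (A : Set Y) (ε : ℝ) (L : List (Set Y)) : Prop :=
  (∀ B ∈ L, IsClopen B ∧ B.Nonempty ∧ Small ε B) ∧ L.Pairwise Disjoint ∧
    lU L = A ∧ 2 ≤ L.length

lemma exists_isGood
    (htwo : ∀ V : Set Y, IsOpen V → V.Nonempty → ∃ a ∈ V, ∃ b ∈ V, a ≠ b)
    {A : Set Y} (hA : IsClopen A) (hne : A.Nonempty) {ε : ℝ} (hε : 0 < ε) :
    ∃ L, IsGood A ε L := by
  -- a small clopen neighborhood of each point of `A`
  have hcov : ∀ x : Y, x ∈ A → ∃ V : Set Y, IsClopen V ∧ x ∈ V ∧ V ⊆ A ∧ Small ε V := by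
    intro x hx
    obtain ⟨V, hV, hxV, hVsub⟩ :=
      compact_exists_isClopen_in_isOpen (hA.isOpen.inter (Metric.isOpen_ball (x := x) (ε := ε/2)))
        ⟨hx, Metric.mem_ball_self (by linarith)⟩
    refine ⟨V, hV, hxV, hVsub.trans inter_subset_left, ?_⟩
    intro p hp q hq
    have hp' := (hVsub hp).2
    have hq' := (hVsub hq).2
    rw [Metric.mem_ball] at hp' hq'
    calc dist p q ≤ dist p x + dist x q := dist_triangle _ _ _
    _ ≤ ε := by rw [dist_comm x q] at *; linarith
  choose! V hVclopen hxV hVA hVsmall using hcov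
  -- finite subcover
  have hAcomp : IsCompact A := hA.isClosed.isCompact
  have hsub : A ⊆ ⋃ x : ↥A, V x.1 := by
    intro y hy
    exact Set.mem_iUnion.2 ⟨⟨y, hy⟩, hxV y hy⟩
  obtain ⟨t, ht⟩ := hAcomp.elim_finite_subcover (fun x : ↥A => V x.1)
    (fun x => (hVclopen x.1 x.2).isOpen) hsub
  -- make a list, disjointify, filter empties
  set L0 : List (Set Y) := t.toList.map (fun x => V x.1) with hL0
  have hL0mem : ∀ B ∈ L0, IsClopen B ∧ B ⊆ A ∧ Small ε B := by
    intro B hB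
    obtain ⟨x, _, rfl⟩ := List.mem_map.1 hB
    exact ⟨hVclopen x.1 x.2, hVA x.1 x.2, hVsmall x.1 x.2⟩
  have hL0U : lU L0 = A := by
    apply subset_antisymm (lU_subset fun B hB => (hL0mem B hB).2.1)
    intro y hy
    obtain ⟨x, hxt, hyx⟩ : ∃ x : ↥A, x ∈ t ∧ y ∈ V x.1 := by
      have := ht hy
      simp only [Set.mem_iUnion] at this
      obtain ⟨i, hi, hyi⟩ := this
      exact ⟨i, hi, hyi⟩
    exact mem_lU.2 ⟨V x.1, List.mem_map.2 ⟨x, by simpa using hxt, rfl⟩, hyx⟩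
  set L1 : List (Set Y) := flt (dj L0) with hL1
  have hL1mem : ∀ B ∈ L1, IsClopen B ∧ B.Nonempty ∧ Small ε B := by
    intro B hB
    obtain ⟨hBd, hBne⟩ := mem_flt.1 hB
    obtain ⟨C, hC, hBC⟩ := dj_subset L0 B hBd
    exact ⟨dj_clopen (fun D hD => (hL0mem D hD).1) B hBd, hBne,
      ((hL0mem C hC).2.2).mono hBC⟩
  have hL1pw : L1.Pairwise Disjoint := (dj_pairwise L0).sublist (flt_sublist _)
  have hL1U : lU L1 = A := by rw [hL1, lU_flt, lU_dj, hL0U]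
  -- fix the length
  match hm : L1 with
  | [] => exact absurd (hL1U ▸ hne) (by simp [lU, Set.not_nonempty_empty])
  | [B] =>
    have hBA : B = A := by simpa [lU] using hL1U
    obtain ⟨B', C', hB', hC', hB'ne, hC'ne, hdisj, huni⟩ := exists_split htwo hA hne
    have hsmall : Small ε A := by
      have := (hL1mem B (by simp)).2.2
      rwa [hBA] at this
    refine ⟨[B', C'], ⟨?_, ?_, ?_, by simp⟩⟩
    · intro D hD
      rcases List.mem_cons.1 hD with rfl | hD'
      · exact ⟨hB', hB'ne, hsmall.mono (huni ▸ Set.subset_union_left)⟩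
      · rcases List.mem_cons.1 hD' with rfl | h
        · exact ⟨hC', hC'ne, hsmall.mono (huni ▸ Set.subset_union_right)⟩
        · simp at h
    · simp [hdisj]
    · simp [lU, huni]
  | B :: C :: T =>
    exact ⟨B :: C :: T, hL1mem, hL1pw, hL1U, by simp⟩

end Space

/-! ### The binary splitting state machine -/

structure StM (Y : Type*) where
  A : Set Y
  Q : List (Set Y)
  n : ℕ

section Machine
variable {Y : Type*} [MetricSpace Y] [CompactSpace Y] [TotallyDisconnectedSpace Y]
variable (htwo : ∀ V : Set Y, IsOpen V → V.Nonempty → ∃ a ∈ V, ∃ b ∈ V, a ≠ b)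

open Classical in
noncomputable def pick (A : Set Y) (ε : ℝ) : List (Set Y) :=
  if h : IsClopen A ∧ A.Nonempty ∧ 0 < ε then (exists_isGood htwo h.1 h.2.1 h.2.2).choose
  else []

lemma pick_isGood {A : Set Y} {ε : ℝ} (hA : IsClopen A) (hne : A.Nonempty) (hε : 0 < ε) :
    IsGood A ε (pick htwo A ε) := by
  rw [pick, dif_pos ⟨hA, hne, hε⟩]
  exact Exists.choose_spec _

noncomputable def stL (st : StM Y) : List (Set Y) :=
  if st.Q.length ≤ 1 then pick htwo st.A ((1 : ℝ)/(st.n + 1)) else st.Q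

def stm (st : StM Y) : ℕ := if st.Q.length ≤ 1 then st.n + 1 else st.n

noncomputable def step (st : StM Y) (b : Bool) : StM Y :=
  if b then ⟨lU (stL htwo st).tail, (stL htwo st).tail, stm st⟩
  else ⟨(stL htwo st).headD ∅, [], stm st⟩

def MInv (st : StM Y) : Prop :=
  IsClopen st.A ∧ st.A.Nonempty ∧
  (∀ B ∈ st.Q, IsClopen B ∧ B.Nonempty ∧ Small ((1:ℝ)/st.n) B) ∧
  st.Q.Pairwise Disjoint ∧
  (st.Q ≠ [] → lU st.Q = st.A) ∧
  (st.Q.length ≤ 1 → st.n ≠ 0 → Small ((1:ℝ)/st.n) st.A)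

lemma stL_spec {st : StM Y} (h : MInv st) :
    (∀ B ∈ stL htwo st, IsClopen B ∧ B.Nonempty ∧ Small ((1:ℝ)/(stm st)) B) ∧
    (stL htwo st).Pairwise Disjoint ∧ lU (stL htwo st) = st.A ∧ 2 ≤ (stL htwo st).length := by
  obtain ⟨hA, hne, hQmem, hQpw, hQU, hQsm⟩ := h
  by_cases hQ : st.Q.length ≤ 1
  · have hpos : (0:ℝ) < 1/(st.n + 1) := by positivity
    have hg := pick_isGood htwo hA hne hpos
    rw [stL, if_pos hQ]
    have hm : ((stm st : ℕ) : ℝ) = (st.n : ℝ) + 1 := by rw [stm, if_pos hQ]; push_cast; ring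
    exact ⟨fun B hB => by rw [hm]; exact hg.1 B hB, hg.2.1, hg.2.2.1, hg.2.2.2⟩
  · rw [stL, if_neg hQ]
    have hm : stm st = st.n := by rw [stm, if_neg hQ]
    refine ⟨fun B hB => by rw [hm]; exact hQmem B hB, hQpw,
      hQU (by intro h; rw [h] at hQ; simp at hQ), by omega⟩

lemma step_inv {st : StM Y} (h : MInv st) (b : Bool) : MInv (step htwo st b) := by
  obtain ⟨hmem, hpw, hU, hlen⟩ := stL_spec htwo h
  rcases hL : stL htwo st with _ | ⟨Bh, T⟩
  · rw [hL] at hlen; simp at hlen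
  rw [hL] at hmem hpw hU hlen
  have hBh := hmem Bh (by simp)
  cases b
  · rw [step, if_neg (by simp), hL]
    refine ⟨hBh.1, hBh.2.1, by simp, by simp, by simp, fun _ _ => by simpa using hBh.2.2⟩
  · rw [step, if_pos rfl, hL]
    rcases T with _ | ⟨C, T'⟩
    · simp at hlen
    have hC := hmem C (by simp)
    have htail : ∀ B ∈ C :: T', IsClopen B ∧ B.Nonempty ∧ Small ((1:ℝ)/(stm st)) B :=
      fun B hB => hmem B (by simp [hB])
    refine ⟨isClopen_lU (fun B hB => (htail B hB).1), ?_, htail,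
      (List.pairwise_cons.1 hpw).2, fun _ => rfl, ?_⟩
    · exact lU_nonempty (by simp) hC.2.1
    · intro hlen1 _
      rcases T' with _ | ⟨D, T''⟩
      · simpa [lU] using hC.2.2
      · simp at hlen1

lemma step_subset {st : StM Y} (h : MInv st) (b : Bool) : (step htwo st b).A ⊆ st.A := by
  obtain ⟨hmem, hpw, hU, hlen⟩ := stL_spec htwo h
  rcases hL : stL htwo st with _ | ⟨Bh, T⟩
  · rw [hL] at hlen; simp at hlen
  rw [hL] at hU
  cases b
  · rw [step, if_neg (by simp), hL]
    exact (hU ▸ Set.subset_union_left : Bh ⊆ st.A)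
  · rw [step, if_pos rfl, hL]
    exact (hU ▸ Set.subset_union_right : lU T ⊆ st.A)

lemma step_partition {st : StM Y} (h : MInv st) :
    (step htwo st false).A ∪ (step htwo st true).A = st.A ∧
      Disjoint (step htwo st false).A (step htwo st true).A := by
  obtain ⟨hmem, hpw, hU, hlen⟩ := stL_spec htwo h
  rcases hL : stL htwo st with _ | ⟨Bh, T⟩
  · rw [hL] at hlen; simp at hlen
  rw [hL] at hU hpw
  rw [step, step, if_neg (by simp), if_pos rfl, hL]
  constructor
  · exact hU
  · exact disjoint_lU (fun B hB => (List.pairwise_cons.1 hpw).1 B hB)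

lemma step_n_le {st : StM Y} (b : Bool) : st.n ≤ (step htwo st b).n ∧
    (step htwo st b).n ≤ st.n + 1 := by
  have h1 : (step htwo st b).n = stm st := by cases b <;> rfl
  rw [h1, stm]
  split <;> omega

lemma step_n_ne {st : StM Y} (b : Bool) (hn : (step htwo st b).n ≠ st.n) :
    st.Q.length ≤ 1 ∧ (step htwo st b).n = st.n + 1 := by
  have h1 : (step htwo st b).n = stm st := by cases b <;> rfl
  rw [h1] at hn ⊢
  rw [stm] at hn ⊢
  split at hn
  · exact ⟨by assumption, by rw [if_pos (by assumption)]⟩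
  · simp at hn

lemma step_Q_len {st : StM Y} (h : MInv st) (b : Bool) (hn : (step htwo st b).n = st.n) :
    (step htwo st b).Q.length < st.Q.length := by
  have h1 : (step htwo st b).n = stm st := by cases b <;> rfl
  rw [h1, stm] at hn
  have hQ : ¬ st.Q.length ≤ 1 := by intro hQ; rw [if_pos hQ] at hn; omega
  have hL : stL htwo st = st.Q := by rw [stL, if_neg hQ]
  cases b
  · rw [step, if_neg (by simp)]; simpa using by omega
  · rw [step, if_pos rfl, hL]
    simp only [List.length_tail]
    omega

variable [Nonempty Y]

noncomputable def run (x : ℕ → Bool) : ℕ → StM Y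
  | 0 => ⟨Set.univ, [], 0⟩
  | k+1 => step htwo (run x k) (x k)

lemma run_inv (x : ℕ → Bool) (k : ℕ) : MInv (run htwo x k) := by
  induction k with
  | zero =>
    exact ⟨isClopen_univ, Set.univ_nonempty, by simp [run], by simp [run], by simp [run],
      by simp [run]⟩
  | succ k ih => exact step_inv htwo ih (x k)

lemma run_congr {x y : ℕ → Bool} {k : ℕ} (h : ∀ i < k, x i = y i) :
    run htwo x k = run htwo y k := by
  induction k with
  | zero => rfl
  | succ k ih =>
    rw [run, run, ih (fun i hi => h i (by omega)), h k (by omega)]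

lemma run_subset (x : ℕ → Bool) (k : ℕ) :
    (run htwo x (k+1)).A ⊆ (run htwo x k).A :=
  step_subset htwo (run_inv htwo x k) (x k)

lemma run_n_mono (x : ℕ → Bool) {a b : ℕ} (h : a ≤ b) :
    (run htwo x a).n ≤ (run htwo x b).n := by
  induction h with
  | refl => exact le_rfl
  | step h ih => exact ih.trans (step_n_le htwo (x _)).1

lemma run_progress (x : ℕ → Bool) (k : ℕ) :
    ∃ m, k < m ∧ (run htwo x k).n < (run htwo x m).n := by
  by_contra hcon
  push_neg at hcon
  have heq : ∀ m, k ≤ m → (run htwo x m).n = (run htwo x k).n := by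
    intro m hm
    rcases Nat.eq_or_lt_of_le hm with rfl | h
    · rfl
    · exact le_antisymm (hcon m h) (run_n_mono htwo x hm)
  have hdec : ∀ m, k + 1 ≤ m → (run htwo x (m+1)).Q.length < (run htwo x m).Q.length := by
    intro m hm
    apply step_Q_len htwo (run_inv htwo x m)
    rw [show (step htwo (run htwo x m) (x m)) = run htwo x (m+1) from rfl,
      heq (m+1) (by omega), heq m (by omega)]
  have hbound : ∀ j, (run htwo x (k+1+j)).Q.length + j ≤ (run htwo x (k+1)).Q.length := by
    intro j
    induction j with
    | zero => simp
    | succ j ih =>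
      have := hdec (k+1+j) (by omega)
      have h2 : k+1+(j+1) = (k+1+j)+1 := by omega
      rw [h2]
      omega
  have := hbound ((run htwo x (k+1)).Q.length + 1)
  omega

lemma run_n_unbounded (x : ℕ → Bool) (N : ℕ) : ∃ k, N ≤ (run htwo x k).n := by
  induction N with
  | zero => exact ⟨0, by omega⟩
  | succ N ih =>
    obtain ⟨k, hk⟩ := ih
    obtain ⟨m, _, hm⟩ := run_progress htwo x k
    exact ⟨m, by omega⟩

lemma run_small (x : ℕ → Bool) (N : ℕ) (hN : 1 ≤ N) :
    ∃ k, Small ((1:ℝ)/N) (run htwo x k).A := by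
  have hex : ∃ m, N + 1 ≤ (run htwo x m).n := run_n_unbounded htwo x (N+1)
  have hfind := Nat.find_spec hex
  have hk0 : Nat.find hex ≠ 0 := by
    intro h
    rw [h] at hfind
    simp [run] at hfind
  obtain ⟨j, hj'⟩ : ∃ j, Nat.find hex = j + 1 := ⟨Nat.find hex - 1, by omega⟩
  have hj : ¬ N + 1 ≤ (run htwo x j).n := Nat.find_min hex (by omega)
  have hfind' : N + 1 ≤ (run htwo x (j+1)).n := by rw [← hj']; exact hfind
  have hne : (run htwo x (j+1)).n ≠ (run htwo x j).n := by omega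
  obtain ⟨hQlen, hbump⟩ := step_n_ne htwo (x j) hne
  have hnj : N ≤ (run htwo x j).n := by
    have h2 : (run htwo x (j+1)).n = (run htwo x j).n + 1 := hbump
    omega
  have hinv := run_inv htwo x j
  have hsm := hinv.2.2.2.2.2 hQlen (by omega)
  refine ⟨j, hsm.mono' ?_⟩
  apply one_div_le_one_div_of_le (by exact_mod_cast hN)
  exact_mod_cast hnj

/-! ### the homeomorphism -/

lemma run_iInter_nonempty (x : ℕ → Bool) : (⋂ k, (run htwo x k).A).Nonempty := by
  apply IsCompact.nonempty_iInter_of_sequence_nonempty_isCompact_isClosed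
  · exact run_subset htwo x
  · exact fun k => (run_inv htwo x k).2.1
  · exact ((run_inv htwo x 0).1).isClosed.isCompact
  · exact fun k => ((run_inv htwo x k).1).isClosed

noncomputable def limfun (x : ℕ → Bool) : Y := (run_iInter_nonempty htwo x).some

lemma limfun_mem (x : ℕ → Bool) (k : ℕ) : limfun htwo x ∈ (run htwo x k).A := by
  have := (run_iInter_nonempty htwo x).some_mem
  exact Set.mem_iInter.1 this k

lemma eq_of_mem_all {x : ℕ → Bool} {p q : Y} (hp : ∀ k, p ∈ (run htwo x k).A)
    (hq : ∀ k, q ∈ (run htwo x k).A) : p = q := by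
  by_contra hne
  have hd : 0 < dist p q := dist_pos.2 hne
  obtain ⟨N, hN⟩ := exists_nat_one_div_lt hd
  obtain ⟨k, hk⟩ := run_small htwo x (N+1) (by omega)
  have := hk p (hp k) q (hq k)
  have hcast : ((N:ℝ)+1) = ((N+1 : ℕ) : ℝ) := by push_cast; ring
  rw [hcast] at hN
  linarith

lemma limfun_injective : Function.Injective (limfun htwo (Y := Y)) := by
  intro x y hxy
  by_contra hne
  have hex : ∃ k, x k ≠ y k := by
    by_contra hcon
    push_neg at hcon
    exact hne (funext hcon)
  set k := Nat.find hex with hk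
  have hkspec : x k ≠ y k := Nat.find_spec hex
  have hpre : ∀ i < k, x i = y i := fun i hi => by
    have := Nat.find_min hex hi
    simpa using this
  have hrun : run htwo x k = run htwo y k := run_congr htwo hpre
  have hx1 : limfun htwo x ∈ (step htwo (run htwo x k) (x k)).A := limfun_mem htwo x (k+1)
  rw [hxy, hrun] at hx1
  have hy1 : limfun htwo y ∈ (step htwo (run htwo y k) (y k)).A := limfun_mem htwo y (k+1)
  have hdisj := (step_partition htwo (run_inv htwo y k)).2
  rcases Bool.eq_false_or_eq_true (x k) with hxk | hxk
  · have hyk : y k = false := by cases hy : y k <;> simp_all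
    rw [hxk] at hx1; rw [hyk] at hy1
    exact (Set.disjoint_left.1 hdisj hy1) hx1
  · have hyk : y k = true := by cases hy : y k <;> simp_all
    rw [hxk] at hx1; rw [hyk] at hy1
    exact (Set.disjoint_left.1 hdisj hx1) hy1

open Classical in
noncomputable def trav (p : Y) : ℕ → StM Y
  | 0 => ⟨Set.univ, [], 0⟩
  | k+1 =>
    if p ∈ (step htwo (trav p k) false).A then step htwo (trav p k) false
    else step htwo (trav p k) true

open Classical in
noncomputable def tbit (p : Y) (k : ℕ) : Bool :=
  if p ∈ (step htwo (trav htwo p k) false).A then false else true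

lemma run_tbit (p : Y) (k : ℕ) : run htwo (tbit htwo p) k = trav htwo p k := by
  induction k with
  | zero => rfl
  | succ k ih =>
    rw [run, trav, ih, tbit]
    split <;> simp_all

lemma trav_inv (p : Y) (k : ℕ) : MInv (trav htwo p k) := by
  rw [← run_tbit htwo p k]; exact run_inv htwo _ k

lemma mem_trav (p : Y) (k : ℕ) : p ∈ (trav htwo p k).A := by
  induction k with
  | zero => exact Set.mem_univ p
  | succ k ih =>
    rw [trav]
    split
    · assumption
    · have hpart := (step_partition htwo (trav_inv htwo p k)).1
      rw [← hpart] at ih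
      rcases ih with h | h
      · exact absurd h (by assumption)
      · exact h

lemma limfun_surjective : Function.Surjective (limfun htwo (Y := Y)) := by
  intro p
  refine ⟨tbit htwo p, ?_⟩
  apply eq_of_mem_all htwo (fun k => limfun_mem htwo _ k)
  intro k
  rw [run_tbit htwo p k]
  exact mem_trav htwo p k

lemma limfun_continuous : Continuous (limfun htwo (Y := Y)) := by
  rw [continuous_iff_continuousAt]
  intro x
  rw [ContinuousAt, Metric.tendsto_nhds]
  intro ε hε
  obtain ⟨N, hN⟩ := exists_nat_one_div_lt hε
  obtain ⟨k, hk⟩ := run_small htwo x (N+1) (by omega)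
  have hOopen : IsOpen {y : ℕ → Bool | ∀ i < k, y i = x i} := by
    have heq : {y : ℕ → Bool | ∀ i < k, y i = x i} =
        ⋂ i ∈ Finset.range k, (fun y : ℕ → Bool => y i) ⁻¹' {x i} := by
      ext y; simp [Finset.mem_range]
    rw [heq]
    exact isOpen_biInter_finset fun i _ =>
      (continuous_apply i).isOpen_preimage _ (isOpen_discrete _)
  have hO : {y : ℕ → Bool | ∀ i < k, y i = x i} ∈ 𝓝 x :=
    hOopen.mem_nhds (by simp)
  refine Filter.mem_of_superset hO ?_
  intro y hy
  have hrun : run htwo y k = run htwo x k := run_congr htwo hy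
  have h1 : limfun htwo y ∈ (run htwo x k).A := by
    rw [← hrun]; exact limfun_mem htwo y k
  have h2 : limfun htwo x ∈ (run htwo x k).A := limfun_mem htwo x k
  have hd := hk _ h1 _ h2
  have hcast : ((N:ℝ)+1) = ((N+1:ℕ):ℝ) := by push_cast; ring
  rw [hcast] at hN
  simp only [Set.mem_setOf_eq]
  calc dist (limfun htwo y) (limfun htwo x) ≤ 1/((N+1:ℕ):ℝ) := hd
  _ < ε := hN

end Machine

/-- **Brouwer's theorem**: every nonempty compact metrizable totally disconnected
space in which every nonempty open set has at least two points is homeomorphic to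
the Cantor space `ℕ → Bool`. -/
theorem exists_homeo_cantor (Y : Type*) [TopologicalSpace Y] [CompactSpace Y]
    [MetrizableSpace Y] [TotallyDisconnectedSpace Y] [Nonempty Y]
    (htwo : ∀ V : Set Y, IsOpen V → V.Nonempty → ∃ a ∈ V, ∃ b ∈ V, a ≠ b) :
    Nonempty ((ℕ → Bool) ≃ₜ Y) := by
  letI : MetricSpace Y := TopologicalSpace.metrizableSpaceMetric Y
  exact ⟨Continuous.homeoOfEquivCompactToT2
    (f := Equiv.ofBijective (limfun htwo) ⟨limfun_injective htwo, limfun_surjective htwo⟩)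
    (limfun_continuous htwo)⟩



/-! ### two-point lemmas -/

section TwoPoints
open Filter Topology

lemma htwo_of_perfectSpace (X : Type*) [TopologicalSpace X] [PerfectSpace X] :
    ∀ V : Set X, IsOpen V → V.Nonempty → ∃ a ∈ V, ∃ b ∈ V, a ≠ b := by
  intro V hV ⟨x, hx⟩
  have h : V ∩ {x}ᶜ ∈ 𝓝[≠] x :=
    Filter.inter_mem (nhdsWithin_le_nhds (hV.mem_nhds hx)) self_mem_nhdsWithin
  obtain ⟨y, hy⟩ := Filter.nonempty_of_mem h
  exact ⟨y, hy.1, x, hx, hy.2⟩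

lemma htwo_open_subtype {X : Type*} [TopologicalSpace X] [PerfectSpace X]
    {S : Set X} (hS : IsOpen S) :
    ∀ V : Set ↥S, IsOpen V → V.Nonempty → ∃ a ∈ V, ∃ b ∈ V, a ≠ b := by
  intro V hV ⟨x, hx⟩
  obtain ⟨O, hO, rfl⟩ := isOpen_induced_iff.1 hV
  have h1 : (O ∩ S).Nonempty := ⟨x.1, hx, x.2⟩
  obtain ⟨a, ha, b, hb, hab⟩ := htwo_of_perfectSpace X (O ∩ S) (hO.inter hS) h1
  exact ⟨⟨a, ha.2⟩, ha.1, ⟨b, hb.2⟩, hb.1, fun h => hab (congrArg Subtype.val h)⟩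

lemma htwo_prod_cantor {A : Type*} [TopologicalSpace A] :
    ∀ V : Set (A × (ℕ → Bool)), IsOpen V → V.Nonempty → ∃ a ∈ V, ∃ b ∈ V, a ≠ b := by
  intro V hV ⟨⟨a, c⟩, hac⟩
  obtain ⟨u, v, hu, hv, hau, hcv, huv⟩ := isOpen_prod_iff.1 hV a c hac
  obtain ⟨I, w, hw, hpi⟩ := isOpen_pi_iff.1 hv c hcv
  obtain ⟨m, hm⟩ := Infinite.exists_notMem_finset I
  set c' : ℕ → Bool := Function.update c m (!(c m)) with hc'
  have hc'v : c' ∈ v := by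
    apply hpi
    intro i hi
    have hupd : c' i = c i := by
      rw [hc']
      exact Function.update_of_ne (by rintro rfl; exact hm hi) _ _
    rw [hupd]
    exact (hw i hi).2
  have hne : c' ≠ c := by
    intro h
    have := congrFun h m
    rw [hc'] at this
    simp at this
  exact ⟨(a, c), hac, (a, c'), huv ⟨hau, hc'v⟩, fun h => hne (congrArg Prod.snd h).symm⟩

end TwoPoints

/-! ### the shift model -/

section Model
variable {Λ : Type*} [Group Λ] (s : Λ) (n : ℕ) [NeZero n]

def Zc : Set (Λ → Fin n) := {x | ∀ g, x (s * g) = x g + 1}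

lemma isClosed_Zc : IsClosed (Zc s n) := by
  have h : Zc s n = ⋂ g, {x : Λ → Fin n | x (s * g) = x g + 1} := by
    ext x; simp [Zc]
  rw [h]
  refine isClosed_iInter fun g => ?_
  have h2 : {x : Λ → Fin n | x (s * g) = x g + 1} =
      (fun x : Λ → Fin n => (x (s * g), x g + 1)) ⁻¹' {p | p.1 = p.2} := rfl
  rw [h2]
  exact IsClosed.preimage (by continuity) (isClosed_discrete _)

open Fin.CommRing in
lemma exists_mem_Zc (hs : ¬ IsOfFinOrder s) (i : Fin n) :
    ∃ x ∈ Zc s n, x 1 = i := by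
  classical
  have hre : Equivalence (fun g h : Λ => ∃ k : ℤ, s ^ k * g = h) := by
    constructor
    · intro g; exact ⟨0, by simp⟩
    · intro g h hgh
      obtain ⟨k, hk⟩ := hgh
      exact ⟨-k, by rw [← hk]; group⟩
    · intro a b c h1 h2
      obtain ⟨k1, hk1⟩ := h1; obtain ⟨k2, hk2⟩ := h2
      exact ⟨k2 + k1, by rw [← hk2, ← hk1]; group⟩
  let sd : Setoid Λ := ⟨fun g h => ∃ k : ℤ, s ^ k * g = h, hre⟩
  have hq : ∀ g : Λ, ∃ k : ℤ, s ^ k * (Quotient.mk sd g).out = g := fun g =>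
    Quotient.exact (Quotient.out_eq (Quotient.mk sd g))
  choose kk hkk using hq
  have hrec : ∀ g, kk (s * g) = kk g + 1 := by
    intro g
    have hout : (Quotient.mk sd (s * g)).out = (Quotient.mk sd g).out := by
      congr 1
      exact (Quotient.sound (⟨1, by simp⟩ : ∃ k : ℤ, s ^ k * g = s * g)).symm
    have h1 : s ^ (kk (s * g)) * (Quotient.mk sd g).out = s * g := by
      rw [← hout]; exact hkk (s * g)
    have h2 : s ^ (kk g + 1) * (Quotient.mk sd g).out = s * g := by
      rw [add_comm, zpow_one_add, mul_assoc, hkk g]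
    exact injective_zpow_iff_not_isOfFinOrder.2 hs (mul_right_cancel (h1.trans h2.symm))
  refine ⟨fun g => ((kk g : ℤ) : Fin n) + (i - ((kk 1 : ℤ) : Fin n)), fun g => ?_, ?_⟩
  · show ((kk (s * g) : ℤ) : Fin n) + (i - ((kk 1 : ℤ) : Fin n)) =
      ((kk g : ℤ) : Fin n) + (i - ((kk 1 : ℤ) : Fin n)) + 1
    rw [hrec g]
    push_cast
    ring
  · show ((kk (1:Λ) : ℤ) : Fin n) + (i - ((kk 1 : ℤ) : Fin n)) = i
    ring

/-- The right-translation action of `Λ` on the shift model. -/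
def rho (g : Λ) : ↥(Zc s n) ≃ₜ ↥(Zc s n) where
  toFun x := ⟨fun h => x.1 (h * g), fun h => by
    have := x.2 (h * g)
    rwa [← mul_assoc] at this⟩
  invFun x := ⟨fun h => x.1 (h * g⁻¹), fun h => by
    have := x.2 (h * g⁻¹)
    rwa [← mul_assoc] at this⟩
  left_inv x := Subtype.ext (funext fun h => by simp)
  right_inv x := Subtype.ext (funext fun h => by simp)
  continuous_toFun := by
    apply Continuous.subtype_mk
    exact continuous_pi fun h => (continuous_apply (h * g)).comp continuous_subtype_val
  continuous_invFun := by
    apply Continuous.subtype_mk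
    exact continuous_pi fun h => (continuous_apply (h * g⁻¹)).comp continuous_subtype_val

end Model


/-! ### gluing a map along a clopen partition -/

section Glue
variable {X M : Type*} {n : ℕ} {U : Fin n → Set X} {W : Set X}
  (f : ∀ i, ↥(U i) → M) (g : ↥W → M) (hW : ∀ x, (∀ i, x ∉ U i) → x ∈ W)

open Classical in
noncomputable def glueMap : X → M := fun x =>
  if h : ∃ i, x ∈ U i then f h.choose ⟨x, h.choose_spec⟩
  else g ⟨x, hW x (by push_neg at h; exact h)⟩

lemma glueMap_eq_of_mem (hdisj : Pairwise (Function.onFun Disjoint U))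
    {i : Fin n} {x : X} (hx : x ∈ U i) :
    glueMap f g hW x = f i ⟨x, hx⟩ := by
  have hex : ∃ j, x ∈ U j := ⟨i, hx⟩
  rw [glueMap, dif_pos hex]
  have hchoice : hex.choose = i := by
    by_contra hne
    exact (Set.disjoint_left.1 (hdisj hne)) hex.choose_spec hx
  subst hchoice
  rfl

lemma glueMap_eq_of_not {x : X} (h : ¬ ∃ i, x ∈ U i) :
    glueMap f g hW x = g ⟨x, hW x (by push_neg at h; exact h)⟩ := by
  rw [glueMap, dif_neg h]

end Glue
end CantorAux

end CantorAuxSection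

open TopologicalSpace

/-- The group structure on the homeomorphism group of `X`,
with `(f * g) x = f (g x)`. -/
instance homeoGroup (X : Type*) [TopologicalSpace X] : Group (X ≃ₜ X) where
  mul f g := g.trans f
  one := Homeomorph.refl X
  inv := Homeomorph.symm
  mul_assoc _ _ _ := Homeomorph.ext fun _ => rfl
  one_mul _ := Homeomorph.ext fun _ => rfl
  mul_one _ := Homeomorph.ext fun _ => rfl
  inv_mul_cancel f := Homeomorph.ext fun x => f.symm_apply_apply x

/-- The topology on `Homeo(X)` of uniform convergence of a homeomorphism together with
its inverse: for a compact metrizable space `X` the compact-open topology on `C(X, X)`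
is the topology of uniform convergence, and we pull back the product topology along
`φ ↦ (φ, φ⁻¹)`. -/
instance homeoTopology (X : Type*) [TopologicalSpace X] : TopologicalSpace (X ≃ₜ X) :=
  TopologicalSpace.induced
    (fun φ : X ≃ₜ X => ((φ : C(X, X)), (φ.symm : C(X, X)))) inferInstance

/-- The space `S(Γ, X)` of actions of `Γ` on `X`, topologized as a subspace of
the product space `∏_Γ Homeo(X)`. -/
instance actionSpaceTopology (Γ X : Type*) [Group Γ] [TopologicalSpace X] :
    TopologicalSpace (Γ →* (X ≃ₜ X)) :=
  TopologicalSpace.induced (fun α : Γ →* (X ≃ₜ X) => (α : Γ → X ≃ₜ X)) inferInstance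

/-- Let `Λ` be a countable group and `s ∈ Λ` of infinite order. For any finite family
`U 0, …, U (n-1)` of pairwise disjoint nonempty proper clopen subsets of the Cantor
set `X`, there is an action `α : Λ → Homeo(X)` with `α s (U i) = U (i+1)` for all `i`
(indices cyclically, i.e. in `Fin n`). -/
theorem exists_cantor_system_cycling_clopens
    (Λ : Type*) [Group Λ] [Countable Λ] (s : Λ) (hs : ¬ IsOfFinOrder s)
    (X : Type*) [TopologicalSpace X] [CompactSpace X] [MetrizableSpace X]
    [TotallyDisconnectedSpace X] [PerfectSpace X] [Nonempty X]
    (n : ℕ) [NeZero n] (U : Fin n → Set X)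
    (hclopen : ∀ i, IsClopen (U i)) (hne : ∀ i, (U i).Nonempty)
    (hproper : ∀ i, U i ≠ Set.univ) (hdisj : Pairwise (Function.onFun Disjoint U)) :
    ∃ α : Λ →* (X ≃ₜ X), ∀ i : Fin n, α s '' U i = U (i + 1) := by
  classical
  -- the shift model
  haveI hZcomp : CompactSpace ↥(CantorAux.Zc s n) :=
    isCompact_iff_compactSpace.mp ((CantorAux.isClosed_Zc s n).isCompact)
  -- the levels of the model
  let ZI : Fin n → Set ↥(CantorAux.Zc s n) := fun i => {z | (z : Λ → Fin n) 1 = i}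
  have hZIclopen : ∀ i, IsClopen (ZI i) := by
    intro i
    have h : ZI i = (fun z : ↥(CantorAux.Zc s n) => (z : Λ → Fin n) 1) ⁻¹' {i} := rfl
    rw [h]
    exact (isClopen_discrete _).preimage ((continuous_apply 1).comp continuous_subtype_val)
  have hZIne : ∀ i, (ZI i).Nonempty := by
    intro i
    obtain ⟨x, hx, hx1⟩ := CantorAux.exists_mem_Zc s n hs i
    exact ⟨⟨x, hx⟩, hx1⟩
  -- pieces of the model are Cantor sets, as are the `U i`
  have key : ∀ i : Fin n, Nonempty (↥(U i) ≃ₜ (↥(ZI i) × (ℕ → Bool))) := by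
    intro i
    haveI : CompactSpace ↥(ZI i) :=
      isCompact_iff_compactSpace.mp ((hZIclopen i).isClosed.isCompact)
    haveI : Nonempty ↥(ZI i) := (hZIne i).to_subtype
    haveI : CompactSpace ↥(U i) :=
      isCompact_iff_compactSpace.mp ((hclopen i).isClosed.isCompact)
    haveI : Nonempty ↥(U i) := (hne i).to_subtype
    obtain ⟨e1⟩ := CantorAux.exists_homeo_cantor (↥(U i))
      (CantorAux.htwo_open_subtype (hclopen i).isOpen)
    obtain ⟨e2⟩ := CantorAux.exists_homeo_cantor (↥(ZI i) × (ℕ → Bool))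
      CantorAux.htwo_prod_cantor
    exact ⟨e1.symm.trans e2⟩
  have φ : ∀ i : Fin n, ↥(U i) ≃ₜ (↥(ZI i) × (ℕ → Bool)) := fun i => (key i).some
  -- the remainder
  have hWclopen : IsClopen ((⋃ i, U i)ᶜ) := (isClopen_iUnion_of_finite hclopen).compl
  have hWmem : ∀ x : X, (∀ i, x ∉ U i) → x ∈ (⋃ i, U i)ᶜ := by
    intro x hx
    simp only [Set.mem_compl_iff, Set.mem_iUnion]
    push_neg
    exact hx
  -- the glued map
  let M := (↥(CantorAux.Zc s n) × (ℕ → Bool)) ⊕ ↥((⋃ i, U i)ᶜ)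
  let f : ∀ i : Fin n, ↥(U i) → M := fun i y => Sum.inl ((φ i y).1.1, (φ i y).2)
  let E : X → M := CantorAux.glueMap f Sum.inr hWmem
  have hEU : ∀ (i : Fin n) (x : X) (hx : x ∈ U i), E x = f i ⟨x, hx⟩ :=
    fun i x hx => CantorAux.glueMap_eq_of_mem f Sum.inr hWmem hdisj hx
  have hEW : ∀ (x : X) (h : ¬ ∃ i, x ∈ U i),
      E x = Sum.inr ⟨x, hWmem x (by push_neg at h; exact h)⟩ :=
    fun x h => CantorAux.glueMap_eq_of_not f Sum.inr hWmem h
  -- E is bijective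
  have hinj : Function.Injective E := by
    intro x x' h
    by_cases hx : ∃ i, x ∈ U i
    · obtain ⟨i, hxi⟩ := hx
      by_cases hx' : ∃ j, x' ∈ U j
      · obtain ⟨j, hxj⟩ := hx'
        rw [hEU i x hxi, hEU j x' hxj] at h
        have h' := Sum.inl.inj h
        have hfst : ((φ i ⟨x, hxi⟩).1 : ↥(CantorAux.Zc s n)) =
            ((φ j ⟨x', hxj⟩).1 : ↥(CantorAux.Zc s n)) := congrArg Prod.fst h'
        have hsnd : (φ i ⟨x, hxi⟩).2 = (φ j ⟨x', hxj⟩).2 := congrArg Prod.snd h'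
        have hij : i = j := by
          have h1 : (((φ i ⟨x, hxi⟩).1 : ↥(ZI i)) : ↥(CantorAux.Zc s n)) ∈ ZI i :=
            (φ i ⟨x, hxi⟩).1.2
          have h2 : (((φ j ⟨x', hxj⟩).1 : ↥(ZI j)) : ↥(CantorAux.Zc s n)) ∈ ZI j :=
            (φ j ⟨x', hxj⟩).1.2
          rw [show (((φ i ⟨x, hxi⟩).1 : ↥(ZI i)) : ↥(CantorAux.Zc s n)) =
            (((φ j ⟨x', hxj⟩).1 : ↥(ZI j)) : ↥(CantorAux.Zc s n)) from hfst] at h1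
          exact h1.symm.trans h2
        subst hij
        have heq : φ i ⟨x, hxi⟩ = φ i ⟨x', hxj⟩ := Prod.ext (Subtype.ext hfst) hsnd
        have := (φ i).injective heq
        exact congrArg Subtype.val this
      · rw [hEU i x hxi, hEW x' hx'] at h
        simp [f] at h
    · by_cases hx' : ∃ j, x' ∈ U j
      · obtain ⟨j, hxj⟩ := hx'
        rw [hEW x hx, hEU j x' hxj] at h
        simp [f] at h
      · rw [hEW x hx, hEW x' hx'] at h
        simpa using congrArg Subtype.val (Sum.inr.inj h)
  have hsurj : Function.Surjective E := by
    rintro (⟨z, c⟩ | w)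
    · have hz : z ∈ ZI ((z : Λ → Fin n) 1) := rfl
      set y := (φ ((z : Λ → Fin n) 1)).symm (⟨z, hz⟩, c) with hy
      refine ⟨y.1, ?_⟩
      rw [hEU ((z : Λ → Fin n) 1) y.1 y.2]
      have : φ ((z : Λ → Fin n) 1) y = (⟨z, hz⟩, c) := by
        rw [hy]
        exact (φ _).apply_symm_apply _
      show Sum.inl ((φ _ ⟨y.1, y.2⟩).1.1, (φ _ ⟨y.1, y.2⟩).2) = Sum.inl (z, c)
      rw [show (⟨y.1, y.2⟩ : ↥(U ((z : Λ → Fin n) 1))) = y from rfl, this]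
    · refine ⟨w.1, ?_⟩
      have hw : ¬ ∃ i, w.1 ∈ U i := by
        have := w.2
        simp only [Set.mem_compl_iff, Set.mem_iUnion] at this
        exact this
      rw [hEW w.1 hw]
  -- E is continuous
  have hcont : Continuous E := by
    rw [continuous_iff_continuousAt]
    intro x
    by_cases hx : ∃ i, x ∈ U i
    · obtain ⟨i, hxi⟩ := hx
      have hcon : ContinuousOn E (U i) := by
        rw [continuousOn_iff_continuous_restrict]
        have hres : (U i).domRestrict E = fun y : ↥(U i) => f i y := by
          funext y
          exact hEU i y.1 y.2
        rw [hres]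
        exact continuous_inl.comp
          (((continuous_subtype_val.comp continuous_fst).comp (φ i).continuous).prodMk
            (continuous_snd.comp (φ i).continuous))
      exact hcon.continuousAt ((hclopen i).isOpen.mem_nhds hxi)
    · have hcon : ContinuousOn E ((⋃ i, U i)ᶜ) := by
        rw [continuousOn_iff_continuous_restrict]
        have hres : ((⋃ i, U i)ᶜ).domRestrict E = Sum.inr := by
          funext y
          have hy : ¬ ∃ i, y.1 ∈ U i := by
            have := y.2
            simp only [Set.mem_compl_iff, Set.mem_iUnion] at this
            exact this
          rw [Set.restrict_apply, hEW y.1 hy]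
        rw [hres]
        exact continuous_inr
      exact hcon.continuousAt (hWclopen.isOpen.mem_nhds (hWmem x (by push_neg at hx; exact hx)))
  -- the global homeomorphism
  let Φ : X ≃ₜ M :=
    Continuous.homeoOfEquivCompactToT2 (f := Equiv.ofBijective E ⟨hinj, hsurj⟩) hcont
  have hΦcoe : ⇑Φ = E := rfl
  -- images of the pieces
  let VM : Fin n → Set M := fun i =>
    Sum.inl '' {p : ↥(CantorAux.Zc s n) × (ℕ → Bool) | (p.1 : Λ → Fin n) 1 = i}
  have hΦU : ∀ i, Φ '' U i = VM i := by
    intro i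
    apply subset_antisymm
    · rintro m ⟨x, hx, rfl⟩
      rw [hΦcoe, hEU i x hx]
      exact ⟨((φ i ⟨x, hx⟩).1.1, (φ i ⟨x, hx⟩).2), (φ i ⟨x, hx⟩).1.2, rfl⟩
    · rintro m ⟨⟨z, c⟩, hz, rfl⟩
      have hz' : z ∈ ZI i := hz
      set y := (φ i).symm (⟨z, hz'⟩, c) with hy
      refine ⟨y.1, y.2, ?_⟩
      rw [hΦcoe, hEU i y.1 y.2]
      have : φ i y = (⟨z, hz'⟩, c) := by rw [hy]; exact (φ i).apply_symm_apply _
      show Sum.inl ((φ i ⟨y.1, y.2⟩).1.1, (φ i ⟨y.1, y.2⟩).2) = Sum.inl (z, c)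
      rw [show (⟨y.1, y.2⟩ : ↥(U i)) = y from rfl, this]
  -- the action on the model
  let βh : Λ →* (M ≃ₜ M) := MonoidHom.mk'
    (fun g => Homeomorph.sumCongr
      ((CantorAux.rho s n g).prodCongr (Homeomorph.refl (ℕ → Bool)))
      (Homeomorph.refl ↥((⋃ i, U i)ᶜ)))
    (by
      intro a b
      apply Homeomorph.ext
      rintro (⟨z, c⟩ | w)
      · show Sum.inl ((CantorAux.rho s n (a * b) z : ↥(CantorAux.Zc s n)), c) =
          Sum.inl (CantorAux.rho s n a (CantorAux.rho s n b z), c)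
        refine congrArg Sum.inl (Prod.ext ?_ rfl)
        refine Subtype.ext (funext fun h => ?_)
        show (z : Λ → Fin n) (h * (a * b)) = (z : Λ → Fin n) ((h * a) * b)
        rw [mul_assoc]
      · rfl)
  have hβapp : ∀ (g : Λ) (z : ↥(CantorAux.Zc s n)) (c : ℕ → Bool),
      βh g (Sum.inl (z, c)) = Sum.inl (CantorAux.rho s n g z, c) := fun g z c => rfl
  -- the action of s cycles the model pieces
  have hβV : ∀ i, (βh s) '' VM i = VM (i + 1) := by
    intro i
    apply subset_antisymm
    · rintro m ⟨m', ⟨⟨z, c⟩, hz, rfl⟩, rfl⟩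
      rw [hβapp]
      refine ⟨(CantorAux.rho s n s z, c), ?_, rfl⟩
      show ((CantorAux.rho s n s z : ↥(CantorAux.Zc s n)) : Λ → Fin n) 1 = i + 1
      show (z : Λ → Fin n) (1 * s) = i + 1
      have h1 : (z : Λ → Fin n) s = (z : Λ → Fin n) 1 + 1 := by
        have := z.2 1
        rwa [mul_one] at this
      rw [one_mul, h1, hz]
    · rintro m ⟨⟨z, c⟩, hz, rfl⟩
      refine ⟨Sum.inl (CantorAux.rho s n s⁻¹ z, c), ⟨(CantorAux.rho s n s⁻¹ z, c), ?_, rfl⟩, ?_⟩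
      · show (z : Λ → Fin n) (1 * s⁻¹) = i
        have h1 : (z : Λ → Fin n) (s * s⁻¹) = (z : Λ → Fin n) s⁻¹ + 1 := z.2 s⁻¹
        rw [mul_inv_cancel] at h1
        rw [one_mul]
        have h2 : (z : Λ → Fin n) s⁻¹ + 1 = i + 1 := by rw [← h1, hz]
        exact add_right_cancel h2
      · rw [hβapp]
        refine congrArg Sum.inl (Prod.ext ?_ rfl)
        refine Subtype.ext (funext fun h => ?_)
        show (z : Λ → Fin n) ((h * s) * s⁻¹) = (z : Λ → Fin n) h
        rw [mul_assoc, mul_inv_cancel, mul_one]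
  -- conjugate the action back to X
  refine ⟨MonoidHom.mk' (fun g => Φ.trans ((βh g).trans Φ.symm)) ?_, ?_⟩
  · intro a b
    apply Homeomorph.ext
    intro x
    show Φ.symm (βh (a * b) (Φ x)) = Φ.symm (βh a (Φ (Φ.symm (βh b (Φ x)))))
    rw [Φ.apply_symm_apply, βh.map_mul]
    rfl
  · intro i
    show (⇑Φ.symm ∘ ⇑(βh s) ∘ ⇑Φ) '' U i = U (i + 1)
    rw [Set.image_comp, Set.image_comp, hΦU i, hβV i, ← hΦU (i + 1)]
    rw [← Set.image_comp]; simp
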